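/- Fix α with 0 < α < π/2. For every x ∈ (0, sin α), the function G(x) = cos α · arcsin(x/sin α) − arcsin( x·cos α/(sin α·√(1 − x²)) ) is differentiable at x with derivative G′(x) = − ( x² · sin(2α) · √(1 − x²/sin²α) ) / ( (x² − 1) · (cos(2α) + 2x² − 1) ), and this derivative is strictly negative. -/

import Mathlib

set_option maxHeartbeats 1000000


open Real

/-- The function `G(x) = δτ̂(x,0)` is differentiable on `(0, sin α)` with the explicit
strictly negative derivative given in Appendix D of the paper. -/
theorem G_hasDerivAt (α : ℝ) (hα₀ : 0 < α) (hα₁ : α < π / 2)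
    (x : ℝ) (hx : x ∈ Set.Ioo 0 (Real.sin α)) :
    HasDerivAt
      (fun x : ℝ =>
        Real.cos α * arcsin (x / Real.sin α) -
          arcsin (x * Real.cos α / (Real.sin α * Real.sqrt (1 - x ^ 2))))
      (-(x ^ 2 * Real.sin (2 * α) * Real.sqrt (1 - x ^ 2 / Real.sin α ^ 2)) /
        ((x ^ 2 - 1) * (Real.cos (2 * α) + 2 * x ^ 2 - 1))) x ∧
    -(x ^ 2 * Real.sin (2 * α) * Real.sqrt (1 - x ^ 2 / Real.sin α ^ 2)) /
        ((x ^ 2 - 1) * (Real.cos (2 * α) + 2 * x ^ 2 - 1)) < 0 := by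
  obtain ⟨hx0, hxs⟩ := hx
  have hπ : 0 < π := Real.pi_pos
  set s := Real.sin α with hsdef
  set c := Real.cos α with hcdef
  have hs0 : 0 < s := Real.sin_pos_of_pos_of_lt_pi hα₀ (by linarith)
  have hc0 : 0 < c := Real.cos_pos_of_mem_Ioo ⟨by linarith, hα₁⟩
  have hs1 : s ≤ 1 := Real.sin_le_one α
  have hx1 : x < 1 := lt_of_lt_of_le hxs hs1
  have ht0 : (0:ℝ) < 1 - x ^ 2 := by nlinarith
  have hr0 : (0:ℝ) < s ^ 2 - x ^ 2 := by nlinarith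
  have hcs : c ^ 2 + s ^ 2 = 1 := by
    rw [hcdef, hsdef]; exact Real.cos_sq_add_sin_sq α
  set t := Real.sqrt (1 - x ^ 2) with htdef
  set r := Real.sqrt (s ^ 2 - x ^ 2) with hrdef
  have htpos : 0 < t := Real.sqrt_pos.2 ht0
  have hrpos : 0 < r := Real.sqrt_pos.2 hr0
  have ht2 : t ^ 2 = 1 - x ^ 2 := Real.sq_sqrt ht0.le
  have hr2 : r ^ 2 = s ^ 2 - x ^ 2 := Real.sq_sqrt hr0.le
  -- sqrt identities
  have hsqrt1 : Real.sqrt (1 - (x / s) ^ 2) = r / s := by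
    rw [show 1 - (x / s) ^ 2 = (s ^ 2 - x ^ 2) / s ^ 2 by field_simp,
      Real.sqrt_div hr0.le, Real.sqrt_sq hs0.le]
  have hsqrt1' : Real.sqrt (1 - x ^ 2 / s ^ 2) = r / s := by
    rw [show 1 - x ^ 2 / s ^ 2 = (s ^ 2 - x ^ 2) / s ^ 2 by field_simp,
      Real.sqrt_div hr0.le, Real.sqrt_sq hs0.le]
  have hst : (0:ℝ) < s * t := mul_pos hs0 htpos
  have hsqrt2 : Real.sqrt (1 - (x * c / (s * t)) ^ 2) = r / (s * t) := by
    rw [show 1 - (x * c / (s * t)) ^ 2 = (s ^ 2 - x ^ 2) / (s * t) ^ 2 by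
      field_simp
      nlinarith [ht2, hcs]]
    rw [Real.sqrt_div hr0.le, Real.sqrt_sq hst.le]
  -- first term derivative
  have h1 : HasDerivAt (fun y : ℝ => arcsin (y / s))
      (1 / Real.sqrt (1 - (x / s) ^ 2) * (1 / s)) x := by
    have hinner : HasDerivAt (fun y : ℝ => y / s) (1 / s) x := by
      simpa using (hasDerivAt_id x).div_const s
    have hne1 : x / s ≠ -1 :=
      ne_of_gt (lt_trans (by norm_num) (div_pos hx0 hs0))
    have hne2 : x / s ≠ 1 := by
      have : x / s < 1 := (div_lt_one hs0).2 hxs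
      exact this.ne
    exact (Real.hasDerivAt_arcsin hne1 hne2).comp x hinner
  -- sqrt (1 - y^2) derivative
  have hsqD : HasDerivAt (fun y : ℝ => Real.sqrt (1 - y ^ 2)) (-(2 * x) / (2 * t)) x := by
    have hpoly : HasDerivAt (fun y : ℝ => 1 - y ^ 2) (-(2 * x)) x := by
      simpa using ((hasDerivAt_pow 2 x).const_sub 1)
    exact hpoly.sqrt ht0.ne'
  -- inner function of the second arcsin
  have hg : HasDerivAt (fun y : ℝ => y * c / (s * Real.sqrt (1 - y ^ 2)))
      ((c * (s * t) - x * c * (s * (-(2 * x) / (2 * t)))) / (s * t) ^ 2) x := by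
    have hnum : HasDerivAt (fun y : ℝ => y * c) c x := by
      simpa using (hasDerivAt_id x).mul_const c
    have hden : HasDerivAt (fun y : ℝ => s * Real.sqrt (1 - y ^ 2))
        (s * (-(2 * x) / (2 * t))) x := hsqD.const_mul s
    exact hnum.div hden (by positivity)
  have hgx : x * c / (s * t) < 1 := by
    rw [div_lt_one hst]
    nlinarith [ht2, hcs]
  have h2 : HasDerivAt (fun y : ℝ => arcsin (y * c / (s * Real.sqrt (1 - y ^ 2))))
      (1 / Real.sqrt (1 - (x * c / (s * t)) ^ 2) *
        ((c * (s * t) - x * c * (s * (-(2 * x) / (2 * t)))) / (s * t) ^ 2)) x := by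
    have hne1 : x * c / (s * t) ≠ -1 :=
      ne_of_gt (lt_trans (by norm_num) (div_pos (mul_pos hx0 hc0) hst))
    exact (Real.hasDerivAt_arcsin hne1 hgx.ne).comp x hg
  have htotal : HasDerivAt
      (fun y : ℝ => c * arcsin (y / s) -
        arcsin (y * c / (s * Real.sqrt (1 - y ^ 2))))
      (c * (1 / Real.sqrt (1 - (x / s) ^ 2) * (1 / s)) -
        1 / Real.sqrt (1 - (x * c / (s * t)) ^ 2) *
          ((c * (s * t) - x * c * (s * (-(2 * x) / (2 * t)))) / (s * t) ^ 2)) x :=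
    (h1.const_mul c).sub h2
  have hcos2 : Real.cos (2 * α) + 2 * x ^ 2 - 1 = 2 * (x ^ 2 - s ^ 2) := by
    rw [Real.cos_two_mul, ← hcdef]
    linarith [hcs]
  have hsin2 : Real.sin (2 * α) = 2 * s * c := by
    rw [Real.sin_two_mul, ← hsdef, ← hcdef]
  have hxs2 : x ^ 2 - s ^ 2 = -r ^ 2 := by linarith [hr2]
  have hx12 : x ^ 2 - 1 = -t ^ 2 := by linarith [ht2]
  have heq : -(x ^ 2 * Real.sin (2 * α) * Real.sqrt (1 - x ^ 2 / s ^ 2)) /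
        ((x ^ 2 - 1) * (Real.cos (2 * α) + 2 * x ^ 2 - 1)) =
      -(c * x ^ 2) / (t ^ 2 * r) := by
    rw [hsqrt1', hcos2, hsin2, hxs2, hx12]
    field_simp
  have heq2 : c * (1 / Real.sqrt (1 - (x / s) ^ 2) * (1 / s)) -
        1 / Real.sqrt (1 - (x * c / (s * t)) ^ 2) *
          ((c * (s * t) - x * c * (s * (-(2 * x) / (2 * t)))) / (s * t) ^ 2) =
      -(c * x ^ 2) / (t ^ 2 * r) := by
    rw [hsqrt1, hsqrt2]
    field_simp
    ring
  constructor
  · rw [heq, ← heq2]; exact htotal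
  · rw [heq]
    apply div_neg_of_neg_of_pos
    · have : 0 < c * x ^ 2 := by positivity
      linarith
    · positivity
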